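/- For positive reals B_1 ≥ B_2 with D_1 > D_2 > 0: if (B_1+B_2)/(D_1+D_2) ≥ B_1/D_1 and (B_1+B_2)/(D_1+D_2) > (B_1+B_2+B_3)/(D_1+D_2+D_3) for some B_3 ≤ B_2 and D_3 < D_2, then B_2/D_2 > B_3/D_3. Consequently (Lemma on equal budgets): in the Find-Price-Block routine, if two consecutive bidders have equal budgets B_i = B_{i+1}, then slot i cannot be the last slot of the computed price block. -/
import Mathlib

/-- Arithmetic core of the equal-budgets lemma for Find-Price-Block: if slot 2 were the
last slot of the price block, i.e. `(B₁+B₂)/(D₁+D₂) ≥ B₁/D₁` and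
`(B₁+B₂)/(D₁+D₂) > (B₁+B₂+B₃)/(D₁+D₂+D₃)`, then `B₂/D₂ > B₃/D₃`
(so the block cannot end between two bidders with equal budgets). -/
theorem stmt3 (B₁ B₂ B₃ D₁ D₂ D₃ : ℝ)
    (hB₁ : 0 < B₁) (hB₂ : 0 < B₂) (hB12 : B₂ ≤ B₁) (hB23 : B₃ ≤ B₂)
    (hD₃ : 0 < D₃) (hD23 : D₃ < D₂) (hD12 : D₂ < D₁)
    (h1 : B₁ / D₁ ≤ (B₁ + B₂) / (D₁ + D₂))
    (h2 : (B₁ + B₂ + B₃) / (D₁ + D₂ + D₃) < (B₁ + B₂) / (D₁ + D₂)) :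
    B₃ / D₃ < B₂ / D₂ := by
  have hD₂ : 0 < D₂ := hD₃.trans hD23
  have hD₁ : 0 < D₁ := hD₂.trans hD12
  have hD12' : 0 < D₁ + D₂ := by linarith
  have hD123 : 0 < D₁ + D₂ + D₃ := by linarith
  rw [div_le_div_iff₀ hD₁ hD12'] at h1
  rw [div_lt_div_iff₀ hD123 hD12'] at h2
  rw [div_lt_div_iff₀ hD₃ hD₂]
  nlinarith [mul_pos hD₁ hD₂]
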